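/- For each n ≥ 1, the class C^(n) of ordinals α with V_α ≼_n V is not Σ_n definable: there is no Σ_n formula (without parameters) defining C^(n). -/

import Mathlib

/-!  Common framework: the language of set theory, Lévy hierarchy,
Σₙ-elementarity of classes of `ZFSet`s, cumulative hierarchy, etc. -/

open FirstOrder

/-- The language of set theory: a single binary relation symbol (membership). -/
def LSet : FirstOrder.Language where
  Functions _ := Empty
  Relations n := match n with
    | 2 => Unit
    | _ => Empty

/-- `V` (the universe of ZFC sets) as an `LSet`-structure. -/
noncomputable instance : LSet.Structure ZFSet where
  funMap := fun f _ => f.elim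
  RelMap := fun {n} r xs => match n, r, xs with
    | 2, _, xs => xs 0 ∈ xs 1
    | 0, r, _ => r.elim
    | 1, r, _ => r.elim
    | _+3, r, _ => r.elim

/-- Any class of sets as an `LSet`-structure, with the inherited membership relation. -/
noncomputable instance (S : Set ZFSet) : LSet.Structure S where
  funMap := fun f _ => f.elim
  RelMap := fun {n} r xs => match n, r, xs with
    | 2, _, xs => (xs 0 : ZFSet) ∈ (xs 1 : ZFSet)
    | 0, r, _ => r.elim
    | 1, r, _ => r.elim
    | _+3, r, _ => r.elim

mutual
  /-- The Σₙ formulas of the Lévy-style prenex hierarchy. -/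
  inductive IsSigmaFml : ℕ → ∀ {k : ℕ}, LSet.BoundedFormula Empty k → Prop
    | of_qf {k} {φ : LSet.BoundedFormula Empty k} : φ.IsQF → IsSigmaFml 0 φ
    | of_pi {n k} {φ : LSet.BoundedFormula Empty k} : IsPiFml n φ → IsSigmaFml (n+1) φ
    | ex {n k} {φ : LSet.BoundedFormula Empty (k+1)} :
        IsSigmaFml (n+1) φ → IsSigmaFml (n+1) φ.ex
  /-- The Πₙ formulas of the Lévy-style prenex hierarchy. -/
  inductive IsPiFml : ℕ → ∀ {k : ℕ}, LSet.BoundedFormula Empty k → Prop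
    | of_qf {k} {φ : LSet.BoundedFormula Empty k} : φ.IsQF → IsPiFml 0 φ
    | of_sigma {n k} {φ : LSet.BoundedFormula Empty k} : IsSigmaFml n φ → IsPiFml (n+1) φ
    | all {n k} {φ : LSet.BoundedFormula Empty (k+1)} :
        IsPiFml (n+1) φ → IsPiFml (n+1) φ.all
end

/-- Satisfaction of a formula (with `k` parameters) in `V`. -/
def SatV {k : ℕ} (φ : LSet.BoundedFormula Empty k) (xs : Fin k → ZFSet) : Prop :=
  φ.Realize (fun e => e.elim) xs

/-- Satisfaction of a formula (with `k` parameters) in a class `S` of sets. -/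
def SatIn (S : Set ZFSet) {k : ℕ} (φ : LSet.BoundedFormula Empty k) (xs : Fin k → S) : Prop :=
  φ.Realize (fun e => e.elim) xs

/-- `S ≼ₙ V` : Σₙ formulas with parameters in `S` are absolute between `S` and `V`. -/
def SigmaElementary (n : ℕ) (S : Set ZFSet) : Prop :=
  ∀ {k : ℕ} (φ : LSet.BoundedFormula Empty k), IsSigmaFml n φ →
    ∀ xs : Fin k → S, (SatIn S φ xs ↔ SatV φ (fun i => (xs i : ZFSet)))

/-- The cumulative hierarchy `V_α`, as the class of sets of rank `< α`. -/
def Vset (α : Ordinal) : Set ZFSet := {x | x.rank < α}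

universe u

/-- `H_κ`: the class of sets hereditarily of cardinality `< κ`. -/
def Hset (κ : Cardinal.{u}) : Set ZFSet.{u} :=
  {x | ∃ t : ZFSet, t.IsTransitive ∧ x ⊆ t ∧ Cardinal.mk t.toSet < Cardinal.lift.{u+1} κ}

/-- The class `C⁽ⁿ⁾ = {α : V_α ≼ₙ V}`. -/
def Cclass (n : ℕ) : Set Ordinal := {α | SigmaElementary n (Vset α)}

/-- `x` is a (von Neumann) ordinal: a transitive set of transitive sets. -/
def ZFOrd (x : ZFSet) : Prop := x.IsTransitive ∧ ∀ y ∈ x, ZFSet.IsTransitive y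

/-- A transitive class of sets. -/
def TransClass (M : Set ZFSet) : Prop := ∀ x ∈ M, ∀ y, y ∈ x → y ∈ M

/-- `j` is an elementary embedding of `V` into the class `M`. -/
structure ElemEmbV (M : Set ZFSet) (j : ZFSet → ZFSet) : Prop where
  maps : ∀ x, j x ∈ M
  elem : ∀ {k : ℕ} (φ : LSet.BoundedFormula Empty k) (xs : Fin k → ZFSet),
    SatV φ xs ↔ SatIn M φ (fun i => ⟨j (xs i), maps (xs i)⟩)

/-- `j` is an elementary embedding of the class `S` into the class `T`. -/
structure ElemEmbBetween (S T : Set ZFSet) (j : ZFSet → ZFSet) : Prop where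
  maps : ∀ x ∈ S, j x ∈ T
  elem : ∀ {k : ℕ} (φ : LSet.BoundedFormula Empty k) (xs : Fin k → ZFSet) (h : ∀ i, xs i ∈ S),
    SatIn S φ (fun i => ⟨xs i, h i⟩) ↔ SatIn T φ (fun i => ⟨j (xs i), maps _ (h i)⟩)

/-- `κ` is the critical point of `j`: `j` fixes all ordinals `< κ` and moves `κ`. -/
def IsCritPt (j : ZFSet → ZFSet) (κ : ZFSet) : Prop :=
  ZFOrd κ ∧ (∀ x, x ∈ κ → j x = x) ∧ j κ ≠ κ

/-- An ultrafilter on (all subsets of) the set `base`. -/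
structure ZFUltra (base : ZFSet) where
  sets : Set ZFSet
  sub : ∀ X ∈ sets, X ⊆ base
  base_mem : base ∈ sets
  empty_not_mem : (∅ : ZFSet) ∉ sets
  upward : ∀ X ∈ sets, ∀ Y, Y ⊆ base → X ⊆ Y → Y ∈ sets
  ultra : ∀ X, X ⊆ base → (X ∈ sets ∨ ZFSet.sep (fun y => y ∉ X) base ∈ sets)

/-- `κ`-completeness: any family of fewer than `|κ|` many members has its
intersection (with the base) in the ultrafilter. -/
def ZFUltra.Complete {b : ZFSet} (κ : ZFSet) (U : ZFUltra b) : Prop :=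
  ∀ F : Set ZFSet, F ⊆ U.sets → Cardinal.mk F < Cardinal.mk κ.toSet →
    ZFSet.sep (fun x => ∀ X ∈ F, x ∈ X) b ∈ U.sets

/-- Nonprincipality: the complement of every singleton is in the ultrafilter. -/
def ZFUltra.Nonprincipal {b : ZFSet} (U : ZFUltra b) : Prop :=
  ∀ x, ZFSet.sep (fun y => y ≠ x) b ∈ U.sets

/-- Normality for an ultrafilter on an ordinal `κ`: closure under diagonal
intersections. -/
def ZFUltra.NormalOn (κ : ZFSet) (U : ZFUltra κ) : Prop :=
  ∀ A : ZFSet → ZFSet, (∀ α ∈ κ, A α ∈ U.sets) →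
    ZFSet.sep (fun α => ∀ β ∈ α, α ∈ A β) κ ∈ U.sets

/-- `P_κ(γ)`: the set of subsets of `γ` of cardinality `< |κ|`. -/
noncomputable def Pkappa (κ γ : ZFSet) : ZFSet :=
  ZFSet.sep (fun x => Cardinal.mk x.toSet < Cardinal.mk κ.toSet) (ZFSet.powerset γ)

/-- Fineness for an ultrafilter on `P_κ(γ)`. -/
def ZFUltra.Fine (κ γ : ZFSet) (U : ZFUltra (Pkappa κ γ)) : Prop :=
  ∀ a ∈ γ, ZFSet.sep (fun x => a ∈ x) (Pkappa κ γ) ∈ U.sets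

/-- Normality for an ultrafilter on `P_κ(γ)`: closure under diagonal intersections. -/
def ZFUltra.NormalP (κ γ : ZFSet) (U : ZFUltra (Pkappa κ γ)) : Prop :=
  ∀ A : ZFSet → ZFSet, (∀ a ∈ γ, A a ∈ U.sets) →
    ZFSet.sep (fun x => ∀ a ∈ x, x ∈ A a) (Pkappa κ γ) ∈ U.sets

/-- `κ` is `γ`-supercompact: there is a `κ`-complete fine normal ultrafilter on `P_κ(γ)`. -/
def GammaSupercompact (κ γ : ZFSet) : Prop :=
  ∃ U : ZFUltra (Pkappa κ γ), U.Complete κ ∧ U.Fine κ γ ∧ U.NormalP κ γ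

/-- `κ` is supercompact. -/
def Supercompact (κ : ZFSet) : Prop :=
  ZFOrd κ ∧ ∀ γ : ZFSet, ZFOrd γ → GammaSupercompact κ γ

/-- `κ` is measurable: it carries a `κ`-complete nonprincipal ultrafilter. -/
def ZFMeasurable (κ : ZFSet) : Prop :=
  ZFOrd κ ∧ ∃ U : ZFUltra κ, U.Complete κ ∧ U.Nonprincipal

/-- `κ` is `λ`-strong. -/
def LambdaStrong (κ : ZFSet) (lam : Ordinal) : Prop :=
  ∃ (M : Set ZFSet) (j : ZFSet → ZFSet), TransClass M ∧ ElemEmbV M j ∧ IsCritPt j κ ∧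
    lam < (j κ).rank ∧ (∀ x, x.rank < lam → x ∈ M)

/-- `κ` is `λ`-`C⁽ⁿ⁾`-strong. -/
def LambdaCnStrong (n : ℕ) (κ : ZFSet) (lam : Ordinal) : Prop :=
  ∃ (M : Set ZFSet) (j : ZFSet → ZFSet), TransClass M ∧ ElemEmbV M j ∧ IsCritPt j κ ∧
    lam < (j κ).rank ∧ (∀ x, x.rank < lam → x ∈ M) ∧ (j κ).rank ∈ Cclass n

/-- `κ` is superstrong. -/
def Superstrong (κ : ZFSet) : Prop :=
  ∃ (M : Set ZFSet) (j : ZFSet → ZFSet), TransClass M ∧ ElemEmbV M j ∧ IsCritPt j κ ∧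
    (∀ x, x.rank < (j κ).rank → x ∈ M)

/-- `κ` is `C⁽ⁿ⁾`-superstrong. -/
def CnSuperstrong (n : ℕ) (κ : ZFSet) : Prop :=
  ∃ (M : Set ZFSet) (j : ZFSet → ZFSet), TransClass M ∧ ElemEmbV M j ∧ IsCritPt j κ ∧
    (∀ x, x.rank < (j κ).rank → x ∈ M) ∧ (j κ).rank ∈ Cclass n

/-- `κ` is `λ`-`C⁽ⁿ⁾`-extendible. -/
def LamCnExtendible (n : ℕ) (κ : ZFSet) (lam : Ordinal) : Prop :=
  ∃ (μ : Ordinal) (j : ZFSet → ZFSet), ElemEmbBetween (Vset lam) (Vset μ) j ∧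
    IsCritPt j κ ∧ lam < (j κ).rank ∧ (j κ).rank ∈ Cclass n

/-- `κ` is `C⁽ⁿ⁾`-extendible. -/
def CnExtendible (n : ℕ) (κ : ZFSet) : Prop :=
  ∀ lam : Ordinal, κ.rank < lam → LamCnExtendible n κ lam

/-- `κ` is extendible. -/
def Extendible (κ : ZFSet) : Prop :=
  ∀ lam : Ordinal, κ.rank < lam →
    ∃ (μ : Ordinal) (j : ZFSet → ZFSet), ElemEmbBetween (Vset lam) (Vset μ) j ∧
      IsCritPt j κ ∧ lam < (j κ).rank


/-! ### Auxiliary development for `stmt3` -/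

namespace Stmt3Aux

open Ordinal FirstOrder Language

/-- Von Neumann ordinals in `ZFSet`. -/
noncomputable def vN : Ordinal.{u} → ZFSet.{u}
  | o => ZFSet.range fun a : o.ToType => vN ((ToType.mk (o := o)).symm a).1
  termination_by o => o
  decreasing_by exact ((ToType.mk (o := o)).symm a).2

theorem mem_vN {o : Ordinal.{u}} {x : ZFSet.{u}} : x ∈ vN o ↔ ∃ β < o, x = vN β := by
  rw [vN, ZFSet.mem_range]
  constructor
  · rintro ⟨a, rfl⟩
    exact ⟨_, ((ToType.mk (o := o)).symm a).2, rfl⟩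
  · rintro ⟨β, hβ, rfl⟩
    exact ⟨ToType.mk (o := o) ⟨β, hβ⟩, by simp⟩

theorem rank_vN : ∀ o : Ordinal.{u}, (vN o).rank = o
  | o => by
    rw [vN, ZFSet.rank_range]
    have h : ∀ a : o.ToType,
        (vN ((ToType.mk (o := o)).symm a).1).rank = ((ToType.mk (o := o)).symm a).1 :=
      fun a => rank_vN _
    simp_rw [h]
    apply le_antisymm
    · exact Ordinal.lsub_le fun a => ((ToType.mk (o := o)).symm a).2
    · by_contra hlt
      push_neg at hlt
      have := Ordinal.lt_lsub (fun a : o.ToType => ((ToType.mk (o := o)).symm a).1)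
        (ToType.mk (o := o) ⟨_, hlt⟩)
      rw [OrderIso.symm_apply_apply] at this
      exact lt_irrefl _ this
  termination_by o => o
  decreasing_by exact ((ToType.mk (o := o)).symm a).2

theorem vN_transitive (o : Ordinal.{u}) : (vN o).IsTransitive := by
  intro y hy
  obtain ⟨β, hβ, rfl⟩ := mem_vN.1 hy
  intro z hz
  obtain ⟨γ, hγ, rfl⟩ := mem_vN.1 hz
  exact mem_vN.2 ⟨γ, hγ.trans hβ, rfl⟩

theorem zfOrd_vN (o : Ordinal.{u}) : ZFOrd (vN o) := by
  refine ⟨vN_transitive o, fun y hy => ?_⟩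
  obtain ⟨β, _, rfl⟩ := mem_vN.1 hy
  exact vN_transitive β

/-- The cumulative hierarchy as an actual `ZFSet`. -/
noncomputable def Vzf : Ordinal.{u} → ZFSet.{u}
  | o => ZFSet.sUnion (ZFSet.range fun a : o.ToType => ZFSet.powerset (Vzf ((ToType.mk (o := o)).symm a).1))
  termination_by o => o
  decreasing_by exact ((ToType.mk (o := o)).symm a).2

theorem mem_Vzf {o : Ordinal.{u}} {x : ZFSet.{u}} : x ∈ Vzf o ↔ ∃ β < o, x ⊆ Vzf β := by
  rw [Vzf]
  simp only [ZFSet.mem_sUnion, ZFSet.mem_range, Set.mem_range]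
  constructor
  · rintro ⟨z, ⟨a, rfl⟩, hz⟩
    exact ⟨_, ((ToType.mk (o := o)).symm a).2, ZFSet.mem_powerset.1 hz⟩
  · rintro ⟨β, hβ, hsub⟩
    exact ⟨_, ⟨ToType.mk (o := o) ⟨β, hβ⟩, rfl⟩, ZFSet.mem_powerset.2 (by simpa using hsub)⟩

theorem mem_Vzf_iff : ∀ (o : Ordinal.{u}) (x : ZFSet.{u}), x ∈ Vzf o ↔ x.rank < o
  | o, x => by
    rw [mem_Vzf]
    constructor
    · rintro ⟨β, hβ, hsub⟩
      refine lt_of_le_of_lt ?_ hβ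
      rw [ZFSet.rank_le_iff]
      intro y hy
      exact (mem_Vzf_iff β y).1 (hsub hy)
    · intro h
      exact ⟨x.rank, h, fun y hy => (mem_Vzf_iff x.rank y).2 (ZFSet.rank_lt_of_mem hy)⟩
  termination_by o x => o
  decreasing_by exacts [hβ, h]

theorem Vset_eq_toSet (α : Ordinal.{u}) : Vset α = (Vzf α).toSet := by
  ext x
  exact (mem_Vzf_iff α x).symm

instance small_Vset (α : Ordinal.{u}) : Small.{u} (Vset α) := by
  rw [Vset_eq_toSet]
  exact (Vzf α).small_coe

theorem mem_Vset {α : Ordinal.{u}} {x : ZFSet.{u}} : x ∈ Vset α ↔ x.rank < α := Iff.rfl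

theorem snoc_rank {α : Ordinal.{u}} {k : ℕ} {xs : Fin k → ZFSet.{u}}
    (h : ∀ i, (xs i).rank < α) {w : ZFSet.{u}} (hw : w.rank < α) :
    ∀ i, ((Fin.snoc xs w : Fin (k+1) → ZFSet) i).rank < α := by
  intro i
  refine Fin.lastCases ?_ (fun j => ?_) i
  · simpa using hw
  · simpa using h j

/-- Pack a set of small rank into `Vset α`. -/
def inV {α : Ordinal.{u}} (x : ZFSet.{u}) (h : x.rank < α) : ↥(Vset α) := ⟨x, h⟩

@[simp] theorem coe_inV {α : Ordinal.{u}} (x : ZFSet.{u}) (h : x.rank < α) :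
    ((inV x h : ↥(Vset α)) : ZFSet) = x := rfl

/-- Terms of `LSet` are variables, so realization commutes with the inclusion. -/
theorem term_coe {α : Ordinal.{u}} {k : ℕ} (t : LSet.Term (Empty ⊕ Fin k))
    (xs : Fin k → ZFSet.{u}) (h : ∀ i, (xs i).rank < α) :
    ((t.realize (M := ↥(Vset α)) (Sum.elim (fun e => e.elim) fun i => inV (xs i) (h i)) :
      ↥(Vset α)) : ZFSet) = t.realize (M := ZFSet) (Sum.elim (fun e => e.elim) xs) := by
  cases t with
  | var v =>
    cases v with
    | inl e => exact e.elim
    | inr i => rfl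
  | func f ts => exact f.elim

theorem snoc_sub {α : Ordinal.{u}} {k : ℕ} (xs : Fin k → ZFSet.{u})
    (h : ∀ i, (xs i).rank < α) (w : ZFSet.{u}) (hw : w ∈ Vset α)
    (hs : ∀ i, ((Fin.snoc xs w : Fin (k+1) → ZFSet) i).rank < α) :
    (fun i => inV ((Fin.snoc xs w : Fin (k+1) → ZFSet) i) (hs i)) =
      Fin.snoc (fun i => inV (xs i) (h i)) ⟨w, hw⟩ := by
  funext i
  refine Fin.lastCases ?_ (fun j => ?_) i
  · exact Subtype.ext (by simp)
  · exact Subtype.ext (by simp)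

/-- Tarski–Vaught: witness closure implies absoluteness for all formulas. -/
theorem absolute {α : Ordinal.{u}}
    (hwit : ∀ {k : ℕ} (ψ : LSet.BoundedFormula Empty (k+1)) (xs : Fin k → ZFSet.{u}),
      (∀ i, (xs i).rank < α) → (∃ w, SatV ψ (Fin.snoc xs w)) →
        ∃ w : ZFSet.{u}, w.rank < α ∧ SatV ψ (Fin.snoc xs w)) :
    ∀ {k : ℕ} (φ : LSet.BoundedFormula Empty k) (xs : Fin k → ZFSet.{u})
      (h : ∀ i, (xs i).rank < α),
      (SatIn (Vset α) φ (fun i => inV (xs i) (h i)) ↔ SatV φ xs) := by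
  intro k φ
  induction φ with
  | falsum => exact fun xs h => Iff.rfl
  | equal t₁ t₂ =>
    intro xs h
    show (Term.realize _ t₁ : ↥(Vset α)) = Term.realize _ t₂ ↔
      Term.realize _ t₁ = Term.realize _ t₂
    rw [← Subtype.coe_inj, term_coe t₁ xs h, term_coe t₂ xs h]
  | @rel k l R ts =>
    intro xs h
    match l, R with
    | 0, r => exact r.elim
    | 1, r => exact r.elim
    | (n+3), r => exact r.elim
    | 2, r =>
      have key : ∀ (ys : Fin 2 → ↥(Vset α)) (zs : Fin 2 → ZFSet.{u}),
          (∀ i, (ys i : ZFSet) = zs i) →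
          (Structure.RelMap (M := ↥(Vset α)) r ys ↔ Structure.RelMap (M := ZFSet) r zs) := by
        intro ys zs hyz
        show ((ys 0 : ZFSet) ∈ (ys 1 : ZFSet)) ↔ (zs 0 ∈ zs 1)
        rw [hyz 0, hyz 1]
      exact key _ _ (fun i => term_coe (ts i) xs h)
  | imp φ' ψ' ih₁ ih₂ =>
    intro xs h
    simp only [SatIn, SatV, BoundedFormula.realize_imp] at *
    rw [ih₁ xs h, ih₂ xs h]
  | all φ' ih =>
    intro xs h
    simp only [SatIn, SatV, BoundedFormula.realize_all]
    constructor
    · intro hall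
      by_contra hV
      push_neg at hV
      obtain ⟨w, hw⟩ := hV
      have hexn : ∃ w, SatV φ'.not (Fin.snoc xs w) :=
        ⟨w, by simpa [SatV, BoundedFormula.realize_not] using hw⟩
      obtain ⟨w', hw', hsat⟩ := hwit φ'.not xs h hexn
      rw [SatV, BoundedFormula.realize_not] at hsat
      have hs := snoc_rank h hw'
      have h2 : SatIn (Vset α) φ'
          (fun i => inV ((Fin.snoc xs w' : Fin (_+1) → ZFSet) i) (hs i)) := by
        rw [snoc_sub xs h w' (mem_Vset.2 hw') hs]
        exact hall (inV w' hw')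
      exact hsat ((ih (Fin.snoc xs w') hs).1 h2)
    · intro hV a
      obtain ⟨w, hw⟩ := a
      have hs := snoc_rank h (mem_Vset.1 hw)
      rw [← snoc_sub xs h w hw hs]
      exact (ih (Fin.snoc xs w) hs).2 (hV w)

open scoped Classical in
/-- Rank bound for a chosen witness of an existential formula with parameters in `Vset α`. -/
noncomputable def wRank (α : Ordinal.{u})
    (p : Σ k : ℕ, LSet.BoundedFormula Empty (k+1) × (Fin k → ↥(Vset α))) : Ordinal.{u} :=
  if h : ∃ w : ZFSet.{u}, SatV p.2.1 (Fin.snoc (fun i => ((p.2.2 i : ZFSet))) w) then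
    h.choose.rank + 1 else 0

noncomputable def nextOrd (α : Ordinal.{u}) : Ordinal.{u} :=
  max (α + 1) (⨆ p, wRank α p)

theorem lt_nextOrd (α : Ordinal.{u}) : α < nextOrd α :=
  lt_of_lt_of_le (lt_add_one α) (le_max_left _ _)

theorem nextOrd_wit {α : Ordinal.{u}} {k : ℕ} (ψ : LSet.BoundedFormula Empty (k+1))
    (xs : Fin k → ZFSet.{u}) (h : ∀ i, (xs i).rank < α)
    (hex : ∃ w, SatV ψ (Fin.snoc xs w)) :
    ∃ w : ZFSet.{u}, w.rank < nextOrd α ∧ SatV ψ (Fin.snoc xs w) := by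
  set p : Σ k : ℕ, LSet.BoundedFormula Empty (k+1) × (Fin k → ↥(Vset α)) :=
    ⟨k, ψ, fun i => inV (xs i) (h i)⟩ with hp
  have hex' : ∃ w : ZFSet.{u}, SatV p.2.1 (Fin.snoc (fun i => ((p.2.2 i : ZFSet))) w) := hex
  refine ⟨hex'.choose, ?_, hex'.choose_spec⟩
  have h1 : wRank α p = hex'.choose.rank + 1 := by
    unfold wRank
    rw [dif_pos hex']
  calc hex'.choose.rank < wRank α p := by rw [h1]; exact lt_add_one _
    _ ≤ ⨆ q, wRank α q := Ordinal.le_iSup (wRank α) p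
    _ ≤ nextOrd α := le_max_right _ _

noncomputable def chain : ℕ → Ordinal.{u}
  | 0 => 0
  | m + 1 => nextOrd (chain m)

theorem chain_mono : Monotone (chain.{u}) :=
  monotone_nat_of_le_succ fun m => (lt_nextOrd (chain m)).le

noncomputable def limOrd : Ordinal.{u} := ⨆ m, chain m

theorem limOrd_wit : ∀ {k : ℕ} (ψ : LSet.BoundedFormula Empty (k+1))
    (xs : Fin k → ZFSet.{u}), (∀ i, (xs i).rank < limOrd) →
    (∃ w, SatV ψ (Fin.snoc xs w)) →
    ∃ w : ZFSet.{u}, w.rank < limOrd ∧ SatV ψ (Fin.snoc xs w) := by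
  intro k ψ xs h hex
  have h' : ∀ i, ∃ m, (xs i).rank < chain m := by
    intro i
    exact (Ordinal.lt_iSup_iff).1 (h i)
  choose f hf using h'
  set m := Finset.univ.sup f with hm
  have hα : ∀ i, (xs i).rank < chain m :=
    fun i => lt_of_lt_of_le (hf i) (chain_mono (Finset.le_sup (Finset.mem_univ i)))
  obtain ⟨w, hw, hsat⟩ := nextOrd_wit ψ xs hα hex
  have hle : nextOrd (chain m) ≤ limOrd := by
    rw [show nextOrd (chain.{u} m) = chain.{u} (m+1) from rfl]
    unfold limOrd
    exact Ordinal.le_iSup (fun m => chain.{u} m) (m+1)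
  exact ⟨w, lt_of_lt_of_le hw hle, hsat⟩

theorem limOrd_mem_Cclass (n : ℕ) : limOrd.{u} ∈ Cclass n := by
  intro k φ _ xs
  have h : ∀ i, ((fun i => ((xs i : ZFSet))) i).rank < limOrd := fun i => (xs i).2
  have habs := absolute (fun ψ ys hy => limOrd_wit ψ ys hy) φ (fun i => ((xs i : ZFSet))) h
  have : (fun i => inV ((xs i : ZFSet)) (h i)) = xs := by
    funext i; exact Subtype.ext rfl
  rwa [this] at habs

end Stmt3Aux

/-- For `n ≥ 1`, the class `C⁽ⁿ⁾` is not definable by a parameter-free Σₙ formula. -/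
theorem stmt3 (n : ℕ) (hn : 1 ≤ n) :
    ¬ ∃ φ : LSet.BoundedFormula Empty 1, IsSigmaFml n φ ∧
      ∀ x : ZFSet, (SatV φ ![x] ↔ (ZFOrd x ∧ x.rank ∈ Cclass n)) := by
  rintro ⟨φ, hσ, hdef⟩
  obtain ⟨m, rfl⟩ : ∃ m, n = m + 1 := ⟨n - 1, (Nat.succ_pred_eq_of_pos hn).symm⟩
  have hne : (Cclass (m+1)).Nonempty := ⟨Stmt3Aux.limOrd, Stmt3Aux.limOrd_mem_Cclass _⟩
  have h₀ : sInf (Cclass (m+1)) ∈ Cclass (m+1) := csInf_mem hne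
  set α₀ := sInf (Cclass (m+1)) with hα₀
  have hxV : SatV φ ![Stmt3Aux.vN α₀] :=
    (hdef _).2 ⟨Stmt3Aux.zfOrd_vN α₀, by rw [Stmt3Aux.rank_vN]; exact h₀⟩
  have hexV : SatV φ.ex (fun i : Fin 0 => i.elim0) := by
    rw [SatV, Language.BoundedFormula.realize_ex]
    refine ⟨Stmt3Aux.vN α₀, ?_⟩
    have he : (Fin.snoc (fun i : Fin 0 => i.elim0) (Stmt3Aux.vN α₀) : Fin 1 → ZFSet) =
        ![Stmt3Aux.vN α₀] := by
      funext i
      fin_cases i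
      simp [Fin.snoc]
    rw [he]
    exact hxV
  have hsig : IsSigmaFml (m+1) φ.ex := IsSigmaFml.ex hσ
  have hel := h₀ φ.ex hsig (fun i : Fin 0 => i.elim0)
  have hSatIn : SatIn (Vset α₀) φ.ex (fun i : Fin 0 => i.elim0) := by
    rw [hel]
    convert hexV using 2
  simp only [SatIn, Language.BoundedFormula.realize_ex] at hSatIn
  obtain ⟨a, ha⟩ := hSatIn
  have h2 := h₀ φ hσ (Fin.snoc (fun i : Fin 0 => i.elim0) a)
  have hV : SatV φ ![(a : ZFSet)] := by
    convert h2.1 ha using 2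
    rename_i i
    fin_cases i
    simp [Fin.snoc]
  have hmem := (hdef (a : ZFSet)).1 hV
  have hlt : (a : ZFSet).rank < α₀ := a.2
  have hle2 : α₀ ≤ (a : ZFSet).rank :=
    csInf_le (OrderBot.bddBelow (Cclass (m+1))) hmem.2
  exact absurd hle2 (not_le.2 hlt)
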